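/- Let m be a positive integer and n a positive integer divisible by m, and let u, v be integers with gcd(u − 1, m) = 1 and gcd(v, m) = 1. If integers i₁, i₂ and j satisfy (j − v·i₁ + v·((u·i₁) mod m)) ≡ (j − v·i₂ + v·((u·i₂) mod m)) (mod n), then i₁ ≡ i₂ (mod m). -/

import Mathlib

/-- Half-duplex lemma for the type-A1 hopping pattern: if
`j − v·i₁ + v·(u·i₁ mod m) ≡ j − v·i₂ + v·(u·i₂ mod m) (mod n)` with `m ∣ n`,
`gcd(u−1,m) = 1` and `gcd(v,m) = 1`, then `i₁ ≡ i₂ (mod m)`. -/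
theorem stmt_11 (m n u v i₁ i₂ j : ℤ) (hm : 0 < m) (hn : 0 < n) (hmn : m ∣ n)
    (hu1 : Int.gcd (u - 1) m = 1) (hv : Int.gcd v m = 1)
    (h : (j - v * i₁ + v * (u * i₁ % m)) % n = (j - v * i₂ + v * (u * i₂ % m)) % n) :
    i₁ % m = i₂ % m := by
  have hmod : (j - v * i₁ + v * (u * i₁ % m)) ≡ (j - v * i₂ + v * (u * i₂ % m)) [ZMOD m] :=
    Int.ModEq.of_dvd hmn h
  have he₁ : (u * i₁ % m) ≡ u * i₁ [ZMOD m] := Int.emod_emod_of_dvd _ dvd_rfl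
  have he₂ : (u * i₂ % m) ≡ u * i₂ [ZMOD m] := Int.emod_emod_of_dvd _ dvd_rfl
  have h2 : (j - v * i₁ + v * (u * i₁)) ≡ (j - v * i₂ + v * (u * i₂)) [ZMOD m] :=
    (((Int.ModEq.refl (j - v * i₁)).add (he₁.mul_left v)).symm.trans hmod).trans
      ((Int.ModEq.refl (j - v * i₂)).add (he₂.mul_left v))
  have h3 : (v * (u - 1)) * i₁ ≡ (v * (u - 1)) * i₂ [ZMOD m] := by
    have := h2.sub_right j
    have e1 : j - v * i₁ + v * (u * i₁) - j = (v * (u - 1)) * i₁ := by ring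
    have e2 : j - v * i₂ + v * (u * i₂) - j = (v * (u - 1)) * i₂ := by ring
    rwa [e1, e2] at this
  have hco : IsCoprime (v * (u - 1)) m :=
    (Int.isCoprime_iff_gcd_eq_one.mpr hv).mul_left (Int.isCoprime_iff_gcd_eq_one.mpr hu1)
  have hg : Int.gcd m (v * (u - 1)) = 1 := by
    rw [Int.gcd_comm]; exact Int.isCoprime_iff_gcd_eq_one.mp hco
  have := h3.cancel_left_div_gcd hm
  rw [hg] at this; exact (by simpa using this : i₁ ≡ i₂ [ZMOD m])
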